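/- arXiv:1211.3173 — 2 statements merged into one kernel-verified Lean document; each statement's English description precedes it below -/
import Mathlib

section
/- Let Γ be an infinite set, X a Banach space, and T : c₀(Γ) → X a bounded linear operator such that the set {γ ∈ Γ : ‖T(e_γ)‖ > ε} has cardinality |Γ| for some ε > 0 (where e_γ are the unit vectors). Then there is Γ' ⊆ Γ with |Γ'| = |Γ| such that T restricted to c₀(Γ') is an isomorphism onto its image. -/
open Filter Set
open scoped ZeroAtInfty

noncomputable section

abbrev LinfSeq : Type := lp (fun _ : ℕ => ℝ) ⊤

def c0Null : Submodule ℝ LinfSeq where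
  carrier := {x | Tendsto (fun n => x n) atTop (nhds (0 : ℝ))}
  add_mem' := by
    intro x y hx hy
    simpa [lp.coeFn_add] using hx.add hy
  zero_mem' := by
    simpa [lp.coeFn_zero] using (tendsto_const_nhds : Tendsto (fun _ : ℕ => (0:ℝ)) atTop (nhds 0))
  smul_mem' := by
    intro c x hx
    have h := hx.const_mul c
    simpa [lp.coeFn_smul, smul_eq_mul] using h

abbrev LinfModC0 : Type := LinfSeq ⧸ c0Null

/-- `y ∈ ℓ∞/c₀` is constantly `r` on the clopen set `[E]*` of `ℕ*`. -/
def ConstOnStar (E : Set ℕ) (r : ℝ) (y : LinfModC0) : Prop :=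
  ∃ x : LinfSeq, Submodule.Quotient.mk x = y ∧
    Tendsto (fun n => x n) (atTop ⊓ 𝓟 E) (nhds r)

section c0
variable (Γ : Type) [TopologicalSpace Γ] [DiscreteTopology Γ]

def c0Ind (s : Set Γ) (hs : s.Finite) : C₀(Γ, ℝ) where
  toFun := s.indicator 1
  continuous_toFun := continuous_of_discreteTopology
  zero_at_infty' := by
    have h : ∀ᶠ γ in cocompact Γ, γ ∉ s := by
      rw [cocompact_eq_cofinite]; exact Set.Finite.eventually_cofinite_notMem hs
    exact tendsto_const_nhds.congr' (h.mono fun γ hγ => (Set.indicator_of_notMem hγ 1).symm)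

theorem c0Ind_norm_le (s : Set Γ) (hs : s.Finite) : ‖c0Ind Γ s hs‖ ≤ 1 := by
  rw [← ZeroAtInftyContinuousMap.norm_toBCF_eq_norm]
  refine (BoundedContinuousFunction.norm_le zero_le_one).2 fun γ => ?_
  by_cases h : γ ∈ s <;> simp [c0Ind, Set.indicator_apply, h]

abbrev LinfC0 : Type := lp (fun _ : ℕ => C₀(Γ, ℝ)) ⊤

def IsPartialFun (σ : Set (ℕ × Γ)) : Prop :=
  ∀ ⦃n : ℕ⦄ ⦃β β' : Γ⦄, (n, β) ∈ σ → (n, β') ∈ σ → β = β'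

theorem fiber_finite {σ : Set (ℕ × Γ)} (hσ : IsPartialFun Γ σ) (n : ℕ) :
    {β : Γ | (n, β) ∈ σ}.Finite :=
  Set.Subsingleton.finite fun β hβ β' hβ' => hσ hβ hβ'

/-- `1_σ ∈ ℓ∞(c₀(Γ))`, the indicator of the graph of a partial function `σ`. -/
def oneGraph (σ : Set (ℕ × Γ)) (hσ : IsPartialFun Γ σ) : LinfC0 Γ :=
  ⟨fun n => c0Ind Γ {β : Γ | (n, β) ∈ σ} (fiber_finite Γ hσ n), by
    apply memℓp_infty
    refine ⟨1, ?_⟩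
    rintro - ⟨n, rfl⟩
    exact c0Ind_norm_le Γ _ _⟩

theorem isPartialFun_graph (σ : ℕ → Γ) : IsPartialFun Γ {p : ℕ × Γ | σ p.1 = p.2} := by
  rintro n β β' h h'
  simp only [Set.mem_setOf_eq] at h h'
  exact h.symm.trans h'

/-- `1_σ` for a total function `σ : ℕ → Γ`. -/
def oneFun (σ : ℕ → Γ) : LinfC0 Γ :=
  oneGraph Γ {p : ℕ × Γ | σ p.1 = p.2} (isPartialFun_graph Γ σ)

theorem isPartialFun_single (n : ℕ) (α : Γ) : IsPartialFun Γ {(n, α)} := by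
  rintro m β β' h h'
  simp only [Set.mem_singleton_iff, Prod.mk.injEq] at h h'
  exact h.2.trans h'.2.symm

/-- `1_{n,α}`, the indicator of `{(n,α)}`. -/
def onePt (n : ℕ) (α : Γ) : LinfC0 Γ :=
  oneGraph Γ {(n, α)} (isPartialFun_single Γ n α)

end c0

section Banach
variable (Y : Type) [NormedAddCommGroup Y] [NormedSpace ℝ Y]

abbrev LinfB : Type := lp (fun _ : ℕ => Y) ⊤

def c0NullB : Submodule ℝ (LinfB Y) where
  carrier := {x | Tendsto (fun n => x n) atTop (nhds (0 : Y))}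
  add_mem' := by
    intro x y hx hy
    simpa [lp.coeFn_add] using hx.add hy
  zero_mem' := by
    simpa [lp.coeFn_zero] using (tendsto_const_nhds : Tendsto (fun _ : ℕ => (0:Y)) atTop (nhds 0))
  smul_mem' := by
    intro c x hx
    have h := hx.const_smul c
    simpa [lp.coeFn_smul] using h

abbrev LinfModC0B : Type := LinfB Y ⧸ c0NullB Y

end Banach



namespace RosenthalAux

open Cardinal

variable {Γ : Type}

/-- The total variation of `lam` on a set `B`. -/
noncomputable def wgt (lam : Γ → ℝ) (B : Set Γ) : ℝ := ∑' β : B, |lam β|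

lemma wgt_empty (lam : Γ → ℝ) : wgt lam (∅ : Set Γ) = 0 := by
  simp [wgt, tsum_empty]

lemma wgt_eq (lam : Γ → ℝ) (B : Set Γ) :
    wgt lam B = ∑' β, B.indicator (fun β => |lam β|) β :=
  tsum_subtype B (fun β => |lam β|)

lemma wgt_le_tsum (lam : Γ → ℝ) (h : Summable fun β => |lam β|) (B : Set Γ) :
    wgt lam B ≤ ∑' β, |lam β| := by
  rw [wgt_eq]
  refine Summable.tsum_le_tsum (fun β => ?_) (h.indicator B) h
  exact Set.indicator_le_self' (fun _ _ => abs_nonneg _) β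

lemma wgt_union (lam : Γ → ℝ) (h : Summable fun β => |lam β|) {B C : Set Γ}
    (hd : Disjoint B C) : wgt lam (B ∪ C) = wgt lam B + wgt lam C :=
  (h.subtype B).tsum_union_disjoint hd (h.subtype C)

lemma sum_le_wgt (lam : Γ → ℝ) (h : Summable fun β => |lam β|) {B : Set Γ}
    (F : Finset Γ) (hF : ↑F ⊆ B) : ∑ β ∈ F, |lam β| ≤ wgt lam B := by
  rw [wgt_eq]
  have : ∑ β ∈ F, |lam β| = ∑ β ∈ F, B.indicator (fun β => |lam β|) β := by
    refine Finset.sum_congr rfl fun β hβ => ?_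
    rw [Set.indicator_of_mem (hF hβ)]
  rw [this]
  exact Summable.sum_le_tsum F (fun i _ => Set.indicator_nonneg (fun _ _ => abs_nonneg _) _)
    (h.indicator B)

/-- Inside a set `S` of infinite cardinality `κ` one can find `κ` pairwise disjoint
subsets, each of cardinality `κ`. -/
lemma exists_pieces (S : Set Γ) (hS : ℵ₀ ≤ #S) :
    ∃ P : ↥S → Set Γ, (∀ i, P i ⊆ S) ∧ (∀ i, #(P i) = #S) ∧
      ∀ i j : ↥S, i ≠ j → Disjoint (P i) (P j) := by
  have h1 : #(↥S × ↥S) = #↥S := by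
    rw [Cardinal.mk_prod, Cardinal.lift_id, Cardinal.mul_eq_self hS]
  obtain ⟨e⟩ := Cardinal.eq.mp h1.symm
  refine ⟨fun i => Subtype.val '' {x : ↥S | (e x).1 = i}, ?_, ?_, ?_⟩
  · intro i γ hγ
    obtain ⟨x, -, rfl⟩ := hγ
    exact x.2
  · intro i
    rw [Cardinal.mk_image_eq Subtype.val_injective]
    have e2 : {x : ↥S | (e x).1 = i} ≃ ↥S :=
      { toFun := fun x => (e x.1).2
        invFun := fun y => ⟨e.symm (i, y), by simp⟩
        left_inv := fun x => by
          have hx : e x.1 = (i, (e x.1).2) := Prod.ext x.2 rfl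
          ext
          simp [← hx]
        right_inv := fun y => by simp }
    exact Cardinal.mk_congr e2
  · intro i j hij
    rw [Set.disjoint_left]
    rintro γ ⟨x, hx, rfl⟩ ⟨y, hy, hxy⟩
    have : x = y := Subtype.val_injective hxy.symm
    subst this
    exact hij (hx.symm.trans hy)

/-- Rosenthal's disjointification lemma: a uniformly bounded family of `ℓ¹`-weights
indexed by a set `A` admits a subfamily of full cardinality which is almost disjoint. -/
lemma comb (A : Set Γ) (lam : Γ → Γ → ℝ) (M ε' : ℝ) (hε' : 0 < ε')
    (hA : ℵ₀ ≤ #A)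
    (hsum : ∀ γ, Summable fun β => |lam γ β|)
    (hM : ∀ γ ∈ A, ∑' β, |lam γ β| ≤ M) :
    ∃ G, G ⊆ A ∧ #G = #A ∧ ∀ γ ∈ G, wgt (lam γ) (G \ {γ}) ≤ ε' := by
  by_contra hno
  push_neg at hno
  have step : ∀ n : ℕ, ∃ (S : Set Γ) (B : Γ → Set Γ), S ⊆ A ∧ #S = #A ∧
      ∀ γ ∈ S, Disjoint (B γ) S ∧ (n : ℝ) * ε' ≤ wgt (lam γ) (B γ) := by
    intro n
    induction n with
    | zero =>
      refine ⟨A, fun _ => ∅, le_refl _, rfl, fun γ _ => ⟨disjoint_bot_left, ?_⟩⟩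
      rw [wgt_empty]
      simp
    | succ n ih =>
      obtain ⟨S, B, hSA, hScard, hinv⟩ := ih
      have hSinf : ℵ₀ ≤ #S := hScard ▸ hA
      obtain ⟨P, hPS, hPcard, hPdis⟩ := exists_pieces S hSinf
      have hbad : ∀ i : ↥S, ∃ γ ∈ P i, ε' < wgt (lam γ) (P i \ {γ}) :=
        fun i => hno (P i) ((hPS i).trans hSA) ((hPcard i).trans hScard)
      choose g hg hw using hbad
      have hginj : Function.Injective g := by
        intro i j hij
        by_contra hne
        exact (Set.disjoint_left.mp (hPdis i j hne)) (hg i) (hij ▸ hg j)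
      classical
      refine ⟨Set.range g,
        fun γ => if h : ∃ i, g i = γ then B γ ∪ (P h.choose \ {γ}) else B γ,
        ?_, ?_, ?_⟩
      · rintro γ ⟨i, rfl⟩
        exact hSA (hPS i (hg i))
      · rw [Cardinal.mk_range_eq g hginj, ← hScard]
      · rintro γ ⟨i, rfl⟩
        have hex : ∃ j, g j = g i := ⟨i, rfl⟩
        have hchoose : hex.choose = i := hginj hex.choose_spec
        have hBdef : (if h : ∃ j, g j = g i then B (g i) ∪ (P h.choose \ {g i}) else B (g i))
            = B (g i) ∪ (P i \ {g i}) := by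
          rw [dif_pos hex, hchoose]
        dsimp only
        rw [hBdef]
        have hgiS : g i ∈ S := hPS i (hg i)
        have hrangeS : Set.range g ⊆ S := by
          rintro γ ⟨j, rfl⟩; exact hPS j (hg j)
        have hdB : Disjoint (B (g i)) S := (hinv (g i) hgiS).1
        constructor
        · refine Set.disjoint_union_left.mpr ⟨hdB.mono_right hrangeS, ?_⟩
          rw [Set.disjoint_left]
          rintro γ ⟨hγP, hγne⟩ ⟨j, rfl⟩
          by_cases hji : j = i
          · exact hγne (by rw [hji]; exact Set.mem_singleton _)
          · exact (Set.disjoint_left.mp (hPdis j i hji)) (hg j) hγP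
        · have hdisj : Disjoint (B (g i)) (P i \ {g i}) :=
            hdB.mono_right ((Set.diff_subset).trans (hPS i))
          rw [wgt_union (lam (g i)) (hsum (g i)) hdisj]
          have h1 := (hinv (g i) hgiS).2
          have h2 := le_of_lt (hw i)
          push_cast
          nlinarith
  obtain ⟨n, hn⟩ := exists_nat_gt (M / ε')
  have hMn : M < (n : ℝ) * ε' := by
    rwa [div_lt_iff₀ hε'] at hn
  obtain ⟨S, B, hSA, hScard, hinv⟩ := step n
  have hSne : Nonempty ↥S := by
    rw [← Cardinal.mk_ne_zero_iff, hScard]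
    exact (lt_of_lt_of_le Cardinal.aleph0_pos hA).ne'
  obtain ⟨γ, hγ⟩ := hSne
  have h1 := (hinv γ hγ).2
  have h2 := wgt_le_tsum (lam γ) (hsum γ) (B γ)
  have h3 := hM γ (hSA hγ)
  linarith

end RosenthalAux

section MainAux

variable (Γ : Type) [TopologicalSpace Γ] [DiscreteTopology Γ]

/-- The unit vector `e γ` of `c₀(Γ)`. -/
noncomputable def eVec (γ : Γ) : C₀(Γ, ℝ) := c0Ind Γ {γ} (Set.finite_singleton γ)

lemma eVec_apply_self (γ : Γ) : eVec Γ γ γ = 1 := by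
  simp [eVec, c0Ind]

lemma eVec_apply_ne {β γ : Γ} (h : γ ≠ β) : eVec Γ β γ = 0 := by
  simp [eVec, c0Ind, Set.indicator_of_notMem, h]

lemma c0_norm_le (f : C₀(Γ, ℝ)) {C : ℝ} (hC : 0 ≤ C) (h : ∀ γ, |f γ| ≤ C) : ‖f‖ ≤ C := by
  rw [← ZeroAtInftyContinuousMap.norm_toBCF_eq_norm]
  exact (BoundedContinuousFunction.norm_le hC).2 fun γ => by simpa using h γ

lemma c0_abs_le_norm (f : C₀(Γ, ℝ)) (γ : Γ) : |f γ| ≤ ‖f‖ := by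
  rw [← ZeroAtInftyContinuousMap.norm_toBCF_eq_norm]
  simpa using BoundedContinuousFunction.norm_coe_le_norm f.toBCF γ

lemma c0_level_finite (f : C₀(Γ, ℝ)) {η : ℝ} (hη : 0 < η) : {γ | η ≤ |f γ|}.Finite := by
  have h := f.zero_at_infty'
  rw [cocompact_eq_cofinite] at h
  have h2 : ∀ᶠ γ in cofinite, ‖f γ‖ < η := NormedAddCommGroup.tendsto_nhds_zero.mp h η hη
  refine Set.Finite.subset (Filter.eventually_cofinite.mp h2) ?_
  intro γ hγ
  simp only [Set.mem_setOf_eq, Real.norm_eq_abs, not_lt]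
  exact hγ

open Classical in
lemma c0_sum_apply (F : Finset Γ) (c : Γ → ℝ) (γ : Γ) :
    (∑ β ∈ F, c β • eVec Γ β) γ = if γ ∈ F then c γ else 0 := by
  classical
  let ev : C₀(Γ, ℝ) →+ ℝ :=
    { toFun := fun h => h γ, map_zero' := rfl, map_add' := fun a b => rfl }
  have h1 : (∑ β ∈ F, c β • eVec Γ β) γ = ∑ β ∈ F, (c β • eVec Γ β) γ :=
    map_sum ev (fun β => c β • eVec Γ β) F
  rw [h1]
  have h2 : ∀ β ∈ F, (c β • eVec Γ β) γ = if β = γ then c β else 0 := by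
    intro β _
    by_cases hβγ : β = γ
    · subst hβγ
      show c β * eVec Γ β β = _
      rw [eVec_apply_self, if_pos rfl, mul_one]
    · show c β * eVec Γ β γ = _
      rw [eVec_apply_ne Γ (Ne.symm hβγ), if_neg hβγ, mul_zero]
  rw [Finset.sum_congr rfl h2, Finset.sum_ite_eq' F γ c]

variable (X : Type) [NormedAddCommGroup X] [NormedSpace ℝ X]

lemma sum_abs_le (T : C₀(Γ, ℝ) →L[ℝ] X) (φ : StrongDual ℝ X) (hφ : ‖φ‖ ≤ 1)
    (F : Finset Γ) : ∑ β ∈ F, |φ (T (eVec Γ β))| ≤ ‖T‖ := by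
  classical
  set c : Γ → ℝ := fun β => if 0 ≤ φ (T (eVec Γ β)) then 1 else -1 with hc
  set h : C₀(Γ, ℝ) := ∑ β ∈ F, c β • eVec Γ β with hh
  have hnorm : ‖h‖ ≤ 1 := by
    refine c0_norm_le Γ h zero_le_one fun γ => ?_
    rw [hh, c0_sum_apply]
    by_cases hγ : γ ∈ F
    · rw [if_pos hγ, hc]
      by_cases h0 : 0 ≤ φ (T (eVec Γ γ)) <;> simp [h0]
    · rw [if_neg hγ]; simp
  have h2 : φ (T h) = ∑ β ∈ F, c β * φ (T (eVec Γ β)) := by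
    rw [hh, map_sum, map_sum]
    refine Finset.sum_congr rfl fun β _ => ?_
    rw [map_smul, map_smul, smul_eq_mul]
  have h3 : ∀ β ∈ F, c β * φ (T (eVec Γ β)) = |φ (T (eVec Γ β))| := by
    intro β _
    simp only [hc]
    by_cases h0 : 0 ≤ φ (T (eVec Γ β))
    · rw [if_pos h0, one_mul, abs_of_nonneg h0]
    · push_neg at h0
      rw [if_neg (not_le.mpr h0), abs_of_neg h0]
      ring
  calc ∑ β ∈ F, |φ (T (eVec Γ β))| = φ (T h) := by rw [h2, Finset.sum_congr rfl h3]
    _ ≤ |φ (T h)| := le_abs_self _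
    _ ≤ ‖φ‖ * ‖T h‖ := by
        have := φ.le_opNorm (T h)
        simpa using this
    _ ≤ 1 * (‖T‖ * ‖h‖) := by
        refine mul_le_mul hφ (T.le_opNorm h) (norm_nonneg _) zero_le_one
    _ ≤ ‖T‖ := by
        rw [one_mul]
        calc ‖T‖ * ‖h‖ ≤ ‖T‖ * 1 := by
              exact mul_le_mul_of_nonneg_left hnorm (norm_nonneg T)
          _ = ‖T‖ := mul_one _

end MainAux

/-- Rosenthal's lemma: if `T : c₀(Γ) → X` is a bounded operator and
`{γ : ‖T eγ‖ > ε}` has cardinality `|Γ|` for some `ε > 0`, then there is `Γ' ⊆ Γ` of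
full cardinality on which `T` is an isomorphism onto its image (bounded below). -/
theorem statement4 (Γ : Type) [TopologicalSpace Γ] [DiscreteTopology Γ] [Infinite Γ]
    (X : Type) [NormedAddCommGroup X] [NormedSpace ℝ X] [CompleteSpace X]
    (T : C₀(Γ, ℝ) →L[ℝ] X) (ε : ℝ) (hε : 0 < ε)
    (hcard : Cardinal.mk {γ : Γ | ‖T (c0Ind Γ {γ} (Set.finite_singleton γ))‖ > ε} =
      Cardinal.mk Γ) :
    ∃ Γ' : Set Γ, Cardinal.mk Γ' = Cardinal.mk Γ ∧
      ∃ δ > (0 : ℝ), ∀ f : C₀(Γ, ℝ), (∀ γ ∉ Γ', f γ = 0) → δ * ‖f‖ ≤ ‖T f‖ := by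
  classical
  set A : Set Γ := {γ : Γ | ‖T (c0Ind Γ {γ} (Set.finite_singleton γ))‖ > ε} with hAdef
  have hAcard : Cardinal.mk ↥A = Cardinal.mk Γ := hcard
  have hAinf : Cardinal.aleph0 ≤ Cardinal.mk ↥A := by
    rw [hAcard]; exact Cardinal.infinite_iff.mp inferInstance
  have hTne : ∀ γ : ↥A, T (eVec Γ γ.1) ≠ 0 := by
    intro γ h
    have h2 : ε < ‖T (eVec Γ γ.1)‖ := γ.2
    rw [h, norm_zero] at h2; linarith
  choose φ0 hφ0norm hφ0eq using fun γ : ↥A => exists_dual_vector ℝ (T (eVec Γ γ.1)) (norm_ne_zero_iff.mpr (hTne γ))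
  set φ : Γ → StrongDual ℝ X := fun γ => if h : γ ∈ A then φ0 ⟨γ, h⟩ else 0 with hφdef
  set lam : Γ → Γ → ℝ := fun γ β => φ γ (T (eVec Γ β)) with hlamdef
  have hφnorm : ∀ γ, ‖φ γ‖ ≤ 1 := by
    intro γ; rw [hφdef]; dsimp only; by_cases h : γ ∈ A
    · rw [dif_pos h]; exact le_of_eq (hφ0norm ⟨γ, h⟩)
    · rw [dif_neg h]; simp
  have hFsum : ∀ γ (F : Finset Γ), ∑ β ∈ F, |lam γ β| ≤ ‖T‖ :=
    fun γ F => sum_abs_le Γ X T (φ γ) (hφnorm γ) F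
  have hsum : ∀ γ, Summable fun β => |lam γ β| :=
    fun γ => summable_of_sum_le (fun β => abs_nonneg _) (hFsum γ)
  have hM : ∀ γ ∈ A, ∑' β, |lam γ β| ≤ ‖T‖ :=
    fun γ _ => Summable.tsum_le_of_sum_le (hsum γ) (hFsum γ)
  obtain ⟨G, hGA, hGcard, hGw⟩ :=
    RosenthalAux.comb A lam ‖T‖ (ε / 2) (by linarith) hAinf hsum hM
  have hlamself : ∀ γ, γ ∈ G → ε < lam γ γ := by
    intro γ h
    have hγA : γ ∈ A := hGA h
    have heq : lam γ γ = ‖T (eVec Γ γ)‖ := by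
      rw [hlamdef]; dsimp only; rw [hφdef]; dsimp only; rw [dif_pos hγA]
      exact_mod_cast hφ0eq ⟨γ, hγA⟩
    rw [heq]
    exact hγA
  refine ⟨G, hGcard.trans hAcard, ε / 2, by linarith, ?_⟩
  intro f hf
  refine le_of_forall_pos_le_add fun θ hθ => ?_
  have hTnn : (0 : ℝ) ≤ ‖T‖ := norm_nonneg T
  set η : ℝ := θ / (ε / 2 + ‖T‖ + 1) with hηdef
  have hD : (0 : ℝ) < ε / 2 + ‖T‖ + 1 := by linarith
  have hηpos : 0 < η := div_pos hθ hD
  set Fs : Finset Γ := (c0_level_finite Γ f hηpos).toFinset with hFsdef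
  have hmemFs : ∀ γ, γ ∈ Fs ↔ η ≤ |f γ| := by
    intro γ; rw [hFsdef, Set.Finite.mem_toFinset]; exact Iff.rfl
  set g : C₀(Γ, ℝ) := ∑ β ∈ Fs, f β • eVec Γ β with hgdef
  have hgeval : ∀ γ, g γ = if γ ∈ Fs then f γ else 0 := fun γ => by
    rw [hgdef]; exact c0_sum_apply Γ Fs f γ
  have hfg : ‖f - g‖ ≤ η := by
    refine c0_norm_le Γ _ (le_of_lt hηpos) fun γ => ?_
    have hsub : (f - g) γ = f γ - g γ := rfl
    rw [hsub, hgeval γ]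
    by_cases hγ : γ ∈ Fs
    · rw [if_pos hγ]; simpa using le_of_lt hηpos
    · rw [if_neg hγ, sub_zero]
      have h2 := (hmemFs γ).not.mp hγ
      push_neg at h2
      exact le_of_lt h2
  have hFsG : ∀ γ ∈ Fs, γ ∈ G := by
    intro γ hγ
    by_contra hγG
    have h1 := hf γ hγG
    have h2 := (hmemFs γ).mp hγ
    rw [h1] at h2
    simp only [abs_zero] at h2
    linarith
  have hkey : ε / 2 * ‖g‖ ≤ ‖T g‖ := by
    rcases Finset.eq_empty_or_nonempty Fs with hFe | hFne
    · rw [hgdef, hFe]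
      simp
    · obtain ⟨γ₀, hγ₀F, hγ₀max⟩ := Finset.exists_max_image Fs (fun β => |f β|) hFne
      have hγ₀G : γ₀ ∈ G := hFsG γ₀ hγ₀F
      have hle : ‖g‖ ≤ |f γ₀| := by
        refine c0_norm_le Γ g (abs_nonneg _) fun γ => ?_
        rw [hgeval γ]
        by_cases hγ : γ ∈ Fs
        · rw [if_pos hγ]; exact hγ₀max γ hγ
        · rw [if_neg hγ]; simpa using abs_nonneg (f γ₀)
      have hge : |f γ₀| ≤ ‖g‖ := by
        have h := c0_abs_le_norm Γ g γ₀
        rwa [hgeval γ₀, if_pos hγ₀F] at h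
      have hng : ‖g‖ = |f γ₀| := le_antisymm hle hge
      have heval : φ γ₀ (T g) = ∑ β ∈ Fs, f β * lam γ₀ β := by
        rw [hgdef, map_sum, map_sum]
        refine Finset.sum_congr rfl fun β _ => ?_
        rw [map_smul, map_smul, smul_eq_mul, hlamdef]
      have hsplit : φ γ₀ (T g) = f γ₀ * lam γ₀ γ₀ + ∑ β ∈ Fs.erase γ₀, f β * lam γ₀ β := by
        rw [heval, ← Finset.add_sum_erase Fs _ hγ₀F]
      have hrest : |∑ β ∈ Fs.erase γ₀, f β * lam γ₀ β| ≤ |f γ₀| * (ε / 2) := by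
        calc |∑ β ∈ Fs.erase γ₀, f β * lam γ₀ β| ≤ ∑ β ∈ Fs.erase γ₀, |f β * lam γ₀ β| :=
              Finset.abs_sum_le_sum_abs _ _
          _ ≤ ∑ β ∈ Fs.erase γ₀, |f γ₀| * |lam γ₀ β| := by
              refine Finset.sum_le_sum fun β hβ => ?_
              rw [abs_mul]
              exact mul_le_mul_of_nonneg_right (hγ₀max β (Finset.mem_of_mem_erase hβ))
                (abs_nonneg _)
          _ = |f γ₀| * ∑ β ∈ Fs.erase γ₀, |lam γ₀ β| := by rw [Finset.mul_sum]
          _ ≤ |f γ₀| * (ε / 2) := by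
              refine mul_le_mul_of_nonneg_left ?_ (abs_nonneg _)
              calc ∑ β ∈ Fs.erase γ₀, |lam γ₀ β| ≤ RosenthalAux.wgt (lam γ₀) (G \ {γ₀}) := by
                    refine RosenthalAux.sum_le_wgt (lam γ₀) (hsum γ₀) _ ?_
                    intro β hβ
                    simp only [Finset.coe_erase, Set.mem_diff, Set.mem_singleton_iff] at hβ ⊢
                    exact ⟨hFsG β hβ.1, hβ.2⟩
                _ ≤ ε / 2 := hGw γ₀ hγ₀G
      have hlam0 := hlamself γ₀ hγ₀G
      have h1 : |f γ₀ * lam γ₀ γ₀| = |f γ₀| * lam γ₀ γ₀ := by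
        rw [abs_mul, abs_of_nonneg (by linarith : (0:ℝ) ≤ lam γ₀ γ₀)]
      have h3 : |f γ₀ * lam γ₀ γ₀| ≤ |φ γ₀ (T g)| + |∑ β ∈ Fs.erase γ₀, f β * lam γ₀ β| := by
        have heq2 : f γ₀ * lam γ₀ γ₀ = φ γ₀ (T g) - ∑ β ∈ Fs.erase γ₀, f β * lam γ₀ β := by
          rw [hsplit]; ring
        rw [heq2]
        simpa using norm_sub_le (φ γ₀ (T g)) (∑ β ∈ Fs.erase γ₀, f β * lam γ₀ β)
      have h2 : |f γ₀| * ε ≤ |f γ₀| * lam γ₀ γ₀ :=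
        mul_le_mul_of_nonneg_left (le_of_lt hlam0) (abs_nonneg _)
      have hbound : |φ γ₀ (T g)| ≤ ‖T g‖ := by
        calc |φ γ₀ (T g)| = ‖φ γ₀ (T g)‖ := (Real.norm_eq_abs _).symm
          _ ≤ ‖φ γ₀‖ * ‖T g‖ := (φ γ₀).le_opNorm _
          _ ≤ 1 * ‖T g‖ := mul_le_mul_of_nonneg_right (hφnorm γ₀) (norm_nonneg _)
          _ = ‖T g‖ := one_mul _
      rw [hng]
      linarith
  have c1 : ‖f‖ ≤ ‖g‖ + η := by
    calc ‖f‖ = ‖g + (f - g)‖ := by congr 1; abel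
      _ ≤ ‖g‖ + ‖f - g‖ := norm_add_le _ _
      _ ≤ ‖g‖ + η := by linarith
  have c2 : ‖T g‖ ≤ ‖T f‖ + ‖T‖ * η := by
    have h1 : ‖T g - T f‖ ≤ ‖T‖ * η := by
      rw [← map_sub]
      calc ‖T (g - f)‖ ≤ ‖T‖ * ‖g - f‖ := T.le_opNorm _
        _ ≤ ‖T‖ * η := by
            rw [norm_sub_rev]
            exact mul_le_mul_of_nonneg_left hfg hTnn
    calc ‖T g‖ = ‖T f + (T g - T f)‖ := by congr 1; abel
      _ ≤ ‖T f‖ + ‖T g - T f‖ := norm_add_le _ _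
      _ ≤ ‖T f‖ + ‖T‖ * η := by linarith
  have c3 : ε / 2 * η + ‖T‖ * η ≤ θ := by
    have h1 : η * (ε / 2 + ‖T‖ + 1) = θ := by
      rw [hηdef]; field_simp
    nlinarith
  have c4 : ε / 2 * ‖f‖ ≤ ε / 2 * ‖g‖ + ε / 2 * η := by nlinarith
  linarith
end
end

section
/- Let λ be an uncountable cardinal and suppose (σ_ξ)_{ξ<ω₁} are pairwise disjoint partial functions from ℕ to λ (viewed as sets of pairs), (r_ξ)_{ξ<ω₁} are nonzero reals, and T : ℓ∞(c₀(λ)) → ℓ∞/c₀ a bounded operator with T(1_{σ_ξ}) constantly equal to r_ξ on some clopen set [F_ξ]* where F_η ⊆* F_ξ for ξ < η. Then |r_ξ| cannot be bounded away from 0 on an infinite set with constant sign; i.e., for every ε > 0, at most finitely many ξ satisfy r_ξ ≥ ε, and at most finitely many satisfy r_ξ ≤ −ε. -/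
open Filter Set
open scoped ZeroAtInfty

noncomputable section

theorem aux_filter_le {E E' : Set ℕ} (h : (E' \ E).Finite) :
    (atTop ⊓ 𝓟 E' : Filter ℕ) ≤ atTop ⊓ 𝓟 E := by
  refine le_inf inf_le_left ?_
  rw [le_principal_iff]
  have h1 : (E' \ E)ᶜ ∈ (atTop : Filter ℕ) := by
    rw [← Nat.cofinite_eq_atTop]
    exact h.compl_mem_cofinite
  have h2 : E' ∈ (𝓟 E' : Filter ℕ) := mem_principal_self E'
  refine mem_of_superset (inter_mem_inf h1 h2) ?_
  rintro n ⟨hn1, hn2⟩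
  by_contra hn
  exact hn1 ⟨hn2, hn⟩

theorem neBot_atTop_inf {E : Set ℕ} (hE : E.Infinite) :
    (atTop ⊓ 𝓟 E : Filter ℕ).NeBot := by
  rw [← frequently_mem_iff_neBot, ← Nat.cofinite_eq_atTop,
    Filter.frequently_cofinite_iff_infinite]
  simpa using hE

set_option synthInstance.maxHeartbeats 1000000 in
set_option maxHeartbeats 1000000 in
/-- Lower bound on the quotient norm from a constant limit on an infinite set. -/
theorem abs_le_norm_mk {E : Set ℕ} (hE : E.Infinite) {s : ℝ} {x : LinfSeq}
    (hx : Tendsto (fun n => x n) (atTop ⊓ 𝓟 E) (nhds s)) :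
    |s| ≤ ‖(Submodule.Quotient.mk x : LinfModC0)‖ := by
  haveI := neBot_atTop_inf hE
  by_contra hlt
  push_neg at hlt
  have hε : (0 : ℝ) < |s| - ‖(Submodule.Quotient.mk x : LinfModC0)‖ := by linarith
  obtain ⟨y, hy, hny⟩ := Submodule.Quotient.norm_mk_lt
    (Submodule.Quotient.mk x : LinfModC0) hε
  have hny' : ‖y‖ < |s| := by linarith
  have hmem : y - x ∈ c0Null := (Submodule.Quotient.eq c0Null).mp hy
  have hz : Tendsto (fun n => (y - x) n) (atTop ⊓ 𝓟 E) (nhds 0) :=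
    hmem.mono_left inf_le_left
  have hyx : Tendsto (fun n => y n) (atTop ⊓ 𝓟 E) (nhds s) := by
    have := hz.add hx
    simp only [lp.coeFn_sub, Pi.sub_apply, zero_add] at this ⊢
    simpa using this
  have habs : Tendsto (fun n => |y n|) (atTop ⊓ 𝓟 E) (nhds |s|) := hyx.abs
  have hle : |s| ≤ ‖y‖ :=
    le_of_tendsto habs (Eventually.of_forall fun n => by
      simpa using lp.norm_apply_le_norm (by norm_num) y n)
  linarith

theorem norm_sum_oneGraph_le_one {Λ : Type} [TopologicalSpace Λ] [DiscreteTopology Λ]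
    {I : Type} (t : Finset I) (σ : I → Set (ℕ × Λ)) (hpf : ∀ ξ, IsPartialFun Λ (σ ξ))
    (hdis : ∀ ξ η, ξ ≠ η → Disjoint (σ ξ) (σ η)) :
    ‖∑ ξ ∈ t, oneGraph Λ (σ ξ) (hpf ξ)‖ ≤ 1 := by
  apply lp.norm_le_of_forall_le zero_le_one
  intro n
  rw [lp.coeFn_sum]
  simp only [Finset.sum_apply]
  rw [← ZeroAtInftyContinuousMap.norm_toBCF_eq_norm]
  refine (BoundedContinuousFunction.norm_le zero_le_one).2 fun γ => ?_
  have hval : ∀ ξ, (oneGraph Λ (σ ξ) (hpf ξ)) n γ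
      = Set.indicator {β : Λ | (n, β) ∈ σ ξ} (1 : Λ → ℝ) γ := fun ξ => rfl
  have hsum : ∀ u : Finset I, ((∑ ξ ∈ u, (oneGraph Λ (σ ξ) (hpf ξ)) n) : C₀(Λ, ℝ)) γ
      = ∑ ξ ∈ u, Set.indicator {β : Λ | (n, β) ∈ σ ξ} (1 : Λ → ℝ) γ := by
    intro u
    induction u using Finset.cons_induction with
    | empty => simp
    | cons a u ha ih =>
      rw [Finset.sum_cons, Finset.sum_cons, ← ih, ← hval a]
      simp
  have key : ∑ ξ ∈ t, Set.indicator {β : Λ | (n, β) ∈ σ ξ} (1 : Λ → ℝ) γ = 0 ∨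
      ∑ ξ ∈ t, Set.indicator {β : Λ | (n, β) ∈ σ ξ} (1 : Λ → ℝ) γ = 1 := by
    by_cases hex : ∃ ξ₀ ∈ t, (n, γ) ∈ σ ξ₀
    · obtain ⟨ξ₀, hξ₀t, hmem⟩ := hex
      right
      rw [Finset.sum_eq_single_of_mem ξ₀ hξ₀t (fun ξ hξ hne => ?_)]
      · exact Set.indicator_of_mem hmem 1
      · refine Set.indicator_of_notMem (fun hγ => ?_) 1
        exact Set.disjoint_left.mp (hdis ξ ξ₀ hne) hγ hmem
    · left
      refine Finset.sum_eq_zero fun ξ hξ => ?_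
      exact Set.indicator_of_notMem (fun hγ => hex ⟨ξ, hξ, hγ⟩) 1
  show |((∑ ξ ∈ t, (oneGraph Λ (σ ξ) (hpf ξ)) n) : C₀(Λ, ℝ)) γ| ≤ 1
  rw [hsum t]
  rcases key with h | h <;> rw [h] <;> norm_num

set_option synthInstance.maxHeartbeats 1000000 in
set_option maxHeartbeats 2000000 in
/-- if `(σ ξ)_{ξ<ω₁}` are pairwise disjoint partial functions `ℕ → λ`,
`(r ξ)` nonzero reals, `T : ℓ∞(c₀(λ)) → ℓ∞/c₀` bounded with `T(1_{σ ξ})` constantly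
`r ξ` on `[F ξ]*` where `F η ⊆* F ξ` for `ξ < η`, then for every `ε > 0` only finitely
many `ξ` have `r ξ ≥ ε` and only finitely many have `r ξ ≤ -ε`. -/
theorem statement7 (Λ : Type) [TopologicalSpace Λ] [DiscreteTopology Λ] [Uncountable Λ]
    (I : Type) [LinearOrder I] (hI : Cardinal.mk I = Cardinal.aleph 1)
    (σ : I → Set (ℕ × Λ)) (hpf : ∀ ξ, IsPartialFun Λ (σ ξ))
    (hdis : ∀ ξ η, ξ ≠ η → Disjoint (σ ξ) (σ η))
    (r : I → ℝ) (hr : ∀ ξ, r ξ ≠ 0)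
    (T : LinfC0 Λ →L[ℝ] LinfModC0)
    (F : I → Set ℕ) (hFinf : ∀ ξ, (F ξ).Infinite)
    (hchain : ∀ ξ η, ξ < η → (F η \ F ξ).Finite)
    (hconst : ∀ ξ, ConstOnStar (F ξ) (r ξ) (T (oneGraph Λ (σ ξ) (hpf ξ)))) :
    ∀ ε > (0 : ℝ), {ξ | r ξ ≥ ε}.Finite ∧ {ξ | r ξ ≤ -ε}.Finite := by
  classical
  intro ε hε
  have key : ∀ c : ℝ, |c| = 1 → {ξ | ε ≤ c * r ξ}.Finite := by
    intro c hc
    by_contra hinf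
    set S : Set I := {ξ | ε ≤ c * r ξ} with hS
    have hSinf : S.Infinite := hinf
    obtain ⟨m, hm⟩ := exists_nat_gt (‖T‖ / ε)
    have hTm : ‖T‖ < m * ε := by
      rw [div_lt_iff₀ hε] at hm; linarith
    obtain ⟨t, htS, htcard⟩ := hSinf.exists_subset_card_eq (m + 1)
    have htne : t.Nonempty := Finset.card_pos.mp (by rw [htcard]; omega)
    set ξs := t.max' htne with hξs
    have hξst : ξs ∈ t := t.max'_mem htne
    -- choose representatives
    choose x hmk htend using hconst
    set L : Filter ℕ := atTop ⊓ 𝓟 (F ξs) with hL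
    haveI : L.NeBot := neBot_atTop_inf (hFinf ξs)
    have htendL : ∀ ξ ∈ t, Tendsto (fun n => x ξ n) L (nhds (r ξ)) := by
      intro ξ hξ
      refine (htend ξ).mono_left (aux_filter_le ?_)
      rcases eq_or_lt_of_le (t.le_max' ξ hξ) with heq | hlt
      · have heq' : ξ = ξs := heq
        rw [heq']; simp
      · exact hchain ξ ξs hlt
    set X : LinfSeq := ∑ ξ ∈ t, x ξ with hX
    have hmkX : (Submodule.Quotient.mk X : LinfModC0)
        = T (∑ ξ ∈ t, oneGraph Λ (σ ξ) (hpf ξ)) := by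
      rw [map_sum, hX, ← Submodule.mkQ_apply, map_sum]
      exact Finset.sum_congr rfl fun ξ _ => hmk ξ
    have htendX : Tendsto (fun n => X n) L (nhds (∑ ξ ∈ t, r ξ)) := by
      have : (fun n => X n) = fun n => ∑ ξ ∈ t, x ξ n := by
        funext n; rw [hX, lp.coeFn_sum]; simp
      rw [this]
      exact tendsto_finset_sum t htendL
    have hlow : |∑ ξ ∈ t, r ξ| ≤ ‖(Submodule.Quotient.mk X : LinfModC0)‖ :=
      abs_le_norm_mk (hFinf ξs) htendX
    have hsumge : (m + 1 : ℝ) * ε ≤ ∑ ξ ∈ t, c * r ξ := by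
      have := Finset.card_nsmul_le_sum t (fun ξ => c * r ξ) ε
        (fun ξ hξ => htS hξ)
      rw [htcard] at this
      simpa [nsmul_eq_mul, add_mul] using this
    have habs : (m + 1 : ℝ) * ε ≤ |∑ ξ ∈ t, r ξ| := by
      calc (m + 1 : ℝ) * ε ≤ ∑ ξ ∈ t, c * r ξ := hsumge
        _ = c * ∑ ξ ∈ t, r ξ := (Finset.mul_sum _ _ _).symm
        _ ≤ |c * ∑ ξ ∈ t, r ξ| := le_abs_self _
        _ = |∑ ξ ∈ t, r ξ| := by rw [abs_mul, hc, one_mul]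
    have hup : ‖(Submodule.Quotient.mk X : LinfModC0)‖ ≤ ‖T‖ := by
      rw [hmkX]
      calc ‖T (∑ ξ ∈ t, oneGraph Λ (σ ξ) (hpf ξ))‖
          ≤ ‖T‖ * ‖∑ ξ ∈ t, oneGraph Λ (σ ξ) (hpf ξ)‖ := T.le_opNorm _
        _ ≤ ‖T‖ * 1 := by
            exact mul_le_mul_of_nonneg_left
              (norm_sum_oneGraph_le_one t σ hpf hdis) (norm_nonneg T)
        _ = ‖T‖ := mul_one _
    have : (m + 1 : ℝ) * ε ≤ ‖T‖ := habs.trans (hlow.trans hup)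
    have : (m : ℝ) * ε < (m + 1 : ℝ) * ε := by nlinarith
    linarith
  constructor
  · exact (key 1 (by norm_num)).subset fun ξ hξ => by simpa using hξ
  · exact (key (-1) (by norm_num)).subset fun ξ hξ => by
      simp only [Set.mem_setOf_eq] at hξ ⊢
      linarith
end
end
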